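/- The maximum over x ∈ [0,1]^n of ∏_{j=1}^n x_j^{α_j} − max{ 0, 1 + Σ_{j=1}^n α_j (x_j − 1) } equals (1 − 1/d)^d, attained at x = (1 − 1/d)·1 (1 the all-ones vector). In particular, for the multilinear monomial (α = 1), the error of its convex envelope max{0, 1 + Σ_j (x_j − 1)} over [0,1]^n equals (1 − 1/n)^n. -/

import Mathlib

open Finset

lemma aux_pow_sub (a b : ℝ) (hb : 0 ≤ b) (hba : b ≤ a) (ha : a ≤ 1) (d : ℕ) :
    a ^ d - b ^ d ≤ d * (a - b) := by
  induction d with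
  | zero => simp
  | succ k ih =>
      have hpow : b ^ k ≤ a ^ k := pow_le_pow_left₀ hb hba k
      have hbk : b ^ k ≤ 1 := pow_le_one₀ hb (hba.trans ha)
      have h1 : (1 - a) * (a ^ k - b ^ k) ≥ 0 :=
        mul_nonneg (by linarith) (by linarith)
      have h2 : (a - b) * (1 - b ^ k) ≥ 0 :=
        mul_nonneg (by linarith) (by linarith)
      have h3 : a ^ (k+1) - b ^ (k+1) = a * (a ^ k - b ^ k) + (a - b) * b ^ k := by ring
      push_cast
      nlinarith

lemma aux_amgm (n : ℕ) (α : Fin n → ℕ) (d : ℕ) (hd : d = ∑ j, α j) (hd0 : 0 < d)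
    (x : Fin n → ℝ) (hx : ∀ j, 0 ≤ x j) :
    ∏ j, x j ^ α j ≤ ((∑ j, (α j : ℝ) * x j) / d) ^ d := by
  have hdpos : (0:ℝ) < d := by exact_mod_cast hd0
  have h := Real.geom_mean_le_arith_mean Finset.univ (fun j => (α j : ℝ)) x
    (fun j _ => by positivity) (by
      rw [← Nat.cast_sum, ← hd]; exact_mod_cast hd0) (fun j _ => hx j)
  have hsum : (∑ j, (α j : ℝ)) = d := by rw [hd]; push_cast; ring
  rw [hsum] at h
  have hL0 : (0:ℝ) ≤ (∏ j, x j ^ (α j : ℝ)) ^ ((d:ℝ)⁻¹) := by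
    apply Real.rpow_nonneg
    exact Finset.prod_nonneg fun j _ => Real.rpow_nonneg (hx j) _
  have h2 := pow_le_pow_left₀ hL0 h d
  have hLeq : ((∏ j, x j ^ (α j : ℝ)) ^ ((d:ℝ)⁻¹)) ^ d = ∏ j, x j ^ α j := by
    have hp0 : (0:ℝ) ≤ ∏ j, x j ^ (α j : ℝ) :=
      Finset.prod_nonneg fun j _ => Real.rpow_nonneg (hx j) _
    rw [← Real.rpow_natCast ((∏ j, x j ^ (α j : ℝ)) ^ ((d:ℝ)⁻¹)) d,
        ← Real.rpow_mul hp0, inv_mul_cancel₀ (ne_of_gt hdpos), Real.rpow_one]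
    exact Finset.prod_congr rfl fun j _ => Real.rpow_natCast _ _
  rw [hLeq] at h2
  exact h2

-- key 1-d bound: t plays the role of Σ α_j x_j ∈ [0,d]
lemma aux_key (d : ℕ) (hd2 : 2 ≤ d) (t : ℝ) (ht0 : 0 ≤ t) (htd : t ≤ d) :
    (t / d) ^ d - max 0 (1 + (t - d)) ≤ (1 - 1 / (d : ℝ)) ^ d := by
  have hdpos : (0:ℝ) < d := by
    have : (0:ℕ) < d := by omega
    exact_mod_cast this
  have hb0 : (0:ℝ) ≤ 1 - 1 / d := by
    rw [sub_nonneg, div_le_one hdpos]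
    exact_mod_cast by omega
  rcases le_or_gt t (d - 1) with hcase | hcase
  · -- 1 + (t - d) ≤ 0
    rw [max_eq_left (by linarith)]
    have : t / d ≤ 1 - 1 / d := by
      rw [div_le_iff₀ hdpos]; field_simp; linarith
    have := pow_le_pow_left₀ (by positivity) this d
    linarith
  · rw [max_eq_right (by linarith)]
    -- a = t/d, b = 1-1/d, b ≤ a ≤ 1, a^d - b^d ≤ d(a-b) = t-(d-1)
    have hba : 1 - 1 / d ≤ t / d := by
      rw [le_div_iff₀ hdpos]; field_simp; linarith
    have ha1 : t / d ≤ 1 := by rw [div_le_one hdpos]; exact htd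
    have h := aux_pow_sub (t / d) (1 - 1 / d) hb0 hba ha1 d
    have heq : (d:ℝ) * (t / d - (1 - 1 / d)) = 1 + (t - d) := by
      field_simp; ring
    linarith


/-- The error of the underestimator `max{0, 1 + Σ α_j(x_j−1)}` over `[0,1]^n` equals
`(1−1/d)^d`, attained at `(1−1/d)·1`; in particular for the multilinear monomial the convex
envelope error equals `(1−1/n)^n`. -/
theorem stmt16 (n : ℕ) (hn : 1 ≤ n) (α : Fin n → ℕ) (hα : ∀ j, 1 ≤ α j)
    (d : ℕ) (hd : d = ∑ j, α j) (hd2 : 2 ≤ d) :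
    IsGreatest ((fun x : Fin n → ℝ =>
        (∏ j, x j ^ α j) - max 0 (1 + ∑ j, (α j : ℝ) * (x j - 1))) ''
        Set.Icc (0 : Fin n → ℝ) 1) ((1 - 1 / (d : ℝ)) ^ d) ∧
    ((∏ j, ((1 : ℝ) - 1 / (d : ℝ)) ^ α j) -
        max 0 (1 + ∑ j, (α j : ℝ) * ((1 - 1 / (d : ℝ)) - 1)) = (1 - 1 / (d : ℝ)) ^ d) ∧
    ((∀ j, α j = 1) →
      IsGreatest ((fun x : Fin n → ℝ =>
          (∏ j, x j) - max 0 (1 + ∑ j, (x j - 1))) '' Set.Icc (0 : Fin n → ℝ) 1)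
        ((1 - 1 / (n : ℝ)) ^ n)) := by
  have hdpos : (0:ℝ) < d := by
    have : (0:ℕ) < d := by omega
    exact_mod_cast this
  have hb0 : (0:ℝ) ≤ 1 - 1 / d := by
    rw [sub_nonneg, div_le_one hdpos]
    exact_mod_cast by omega
  have hb1 : (1:ℝ) - 1 / d ≤ 1 := by
    have : (0:ℝ) < 1 / d := by positivity
    linarith
  -- value at the candidate point
  have hval : (∏ j, ((1 : ℝ) - 1 / (d : ℝ)) ^ α j) -
      max 0 (1 + ∑ j, (α j : ℝ) * ((1 - 1 / (d : ℝ)) - 1)) = (1 - 1 / (d : ℝ)) ^ d := by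
    have hprod : (∏ j, ((1 : ℝ) - 1 / (d : ℝ)) ^ α j) = (1 - 1 / (d : ℝ)) ^ d := by
      rw [Finset.prod_pow_eq_pow_sum, hd]
    have hsum : (∑ j, (α j : ℝ) * ((1 - 1 / (d : ℝ)) - 1)) = -1 := by
      have : (∑ j, (α j : ℝ)) = d := by rw [hd]; push_cast; ring
      rw [← Finset.sum_mul, this]
      field_simp
      ring
    rw [hprod, hsum]
    norm_num
  -- the upper bound
  have hub : ∀ x ∈ Set.Icc (0 : Fin n → ℝ) 1,
      (∏ j, x j ^ α j) - max 0 (1 + ∑ j, (α j : ℝ) * (x j - 1)) ≤ (1 - 1 / (d : ℝ)) ^ d := by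
    intro x hx
    obtain ⟨hx0, hx1⟩ := hx
    have hx0' : ∀ j, 0 ≤ x j := fun j => hx0 j
    have hx1' : ∀ j, x j ≤ 1 := fun j => hx1 j
    set t : ℝ := ∑ j, (α j : ℝ) * x j with ht
    have hsumd : (∑ j, (α j : ℝ)) = d := by rw [hd]; push_cast; ring
    have ht0 : 0 ≤ t := Finset.sum_nonneg fun j _ => mul_nonneg (by positivity) (hx0' j)
    have htd : t ≤ d := by
      rw [← hsumd]
      exact Finset.sum_le_sum fun j _ => by
        nlinarith [hx1' j, (Nat.cast_nonneg (α j) : (0:ℝ) ≤ α j)]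
    have hlin : (∑ j, (α j : ℝ) * (x j - 1)) = t - d := by
      rw [ht, ← hsumd]
      rw [← Finset.sum_sub_distrib]
      exact Finset.sum_congr rfl fun j _ => by ring
    have hgm := aux_amgm n α d hd (by omega) x hx0'
    have hk := aux_key d hd2 t ht0 htd
    rw [hlin]
    calc (∏ j, x j ^ α j) - max 0 (1 + (t - d))
        ≤ (t / d) ^ d - max 0 (1 + (t - d)) := by
          have := hgm; rw [← ht] at this; linarith
      _ ≤ (1 - 1 / (d : ℝ)) ^ d := hk
  have hmem : ((1 : ℝ) - 1 / (d : ℝ)) ^ d ∈ ((fun x : Fin n → ℝ =>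
      (∏ j, x j ^ α j) - max 0 (1 + ∑ j, (α j : ℝ) * (x j - 1))) ''
      Set.Icc (0 : Fin n → ℝ) 1) := by
    refine ⟨fun _ => 1 - 1 / d, ⟨fun j => hb0, fun j => hb1⟩, hval⟩
  have hmain : IsGreatest ((fun x : Fin n → ℝ =>
        (∏ j, x j ^ α j) - max 0 (1 + ∑ j, (α j : ℝ) * (x j - 1))) ''
        Set.Icc (0 : Fin n → ℝ) 1) ((1 - 1 / (d : ℝ)) ^ d) := by
    refine ⟨hmem, ?_⟩
    rintro y ⟨x, hx, rfl⟩
    exact hub x hx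
  refine ⟨hmain, hval, ?_⟩
  intro h1
  have hdn : d = n := by
    rw [hd]
    simp [h1]
  subst hdn
  have hfeq : (fun x : Fin d → ℝ => (∏ j, x j) - max 0 (1 + ∑ j, (x j - 1))) =
      (fun x : Fin d → ℝ => (∏ j, x j ^ α j) - max 0 (1 + ∑ j, (α j : ℝ) * (x j - 1))) := by
    funext x; simp [h1]
  rw [hfeq]
  exact hmain
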